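/- Let a : ℤ × ℤ → ℕ be a function with finite support satisfying the symmetry a(i, i+j) = a(i, i−j) for all i, j ∈ ℤ. Define n_v(i) = Σ_k a(i, k) and n_u(i) = Σ_k a(k, i). Then exactly one of the following holds: (a) n_u(i) = a(i,i) = n_v(i) for all i ∈ ℤ; or (b) there exists i₀ ∈ ℤ such that n_u(i) = n_v(i) for all i > i₀ and n_u(i₀) > n_v(i₀). -/
import Mathlib


/-- Property A: for a finitely supported a : ℤ × ℤ → ℕ with a(i, i+j) = a(i, i−j),
writing n_v(i) = Σ_k a(i,k) (row sums) and n_u(i) = Σ_k a(k,i) (column sums), exactly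
one holds: (a) n_u(i) = a(i,i) = n_v(i) for all i, or (b) there is i₀ with
n_u(i) = n_v(i) for all i > i₀ and n_u(i₀) > n_v(i₀). -/
theorem stmt_9 (a : ℤ × ℤ → ℕ) (hfin : (Function.support a).Finite)
    (hsym : ∀ i j : ℤ, a (i, i + j) = a (i, i - j)) :
    Xor'
      (∀ i : ℤ, (∑ᶠ k : ℤ, a (k, i)) = a (i, i) ∧ a (i, i) = ∑ᶠ k : ℤ, a (i, k))
      (∃ i₀ : ℤ, (∀ i : ℤ, i₀ < i → (∑ᶠ k : ℤ, a (k, i)) = ∑ᶠ k : ℤ, a (i, k)) ∧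
        (∑ᶠ k : ℤ, a (i₀, k)) < ∑ᶠ k : ℤ, a (k, i₀)) := by
  classical
  have hmir : ∀ k i : ℤ, a (k, i) = a (k, 2*k - i) := by
    intro k i
    have h := hsym k (k - i)
    rw [show k + (k - i) = 2*k - i by ring, show k - (k - i) = i by ring] at h
    exact h.symm
  set s : Finset ℤ := (hfin.toFinset.image Prod.fst) ∪ (hfin.toFinset.image Prod.snd)
    with hs
  have hmemf : ∀ k i : ℤ, a (k, i) ≠ 0 → k ∈ s ∧ i ∈ s := by
    intro k i h
    have hmem : (k, i) ∈ hfin.toFinset := by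
      simpa [Set.Finite.mem_toFinset, Function.mem_support] using h
    exact ⟨Finset.mem_union_left _ (Finset.mem_image.2 ⟨(k, i), hmem, rfl⟩),
      Finset.mem_union_right _ (Finset.mem_image.2 ⟨(k, i), hmem, rfl⟩)⟩
  have hrow : ∀ i : ℤ, (∑ᶠ k : ℤ, a (i, k)) = ∑ k ∈ s, a (i, k) := by
    intro i
    apply finsum_eq_sum_of_support_subset
    intro k hk
    exact (hmemf i k hk).2
  have hcol : ∀ i : ℤ, (∑ᶠ k : ℤ, a (k, i)) = ∑ k ∈ s, a (k, i) := by
    intro i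
    apply finsum_eq_sum_of_support_subset
    intro k hk
    exact (hmemf k i hk).1
  by_cases hP : ∀ k i : ℤ, k < i → a (k, i) = 0
  · -- all off-diagonal entries vanish
    have hoff : ∀ k i : ℤ, i ≠ k → a (k, i) = 0 := by
      intro k i hne
      rcases lt_or_gt_of_ne hne with h | h
      · rw [hmir]; exact hP k _ (by omega)
      · exact hP k i h
    have hA : ∀ i : ℤ, (∑ᶠ k : ℤ, a (k, i)) = a (i, i) ∧ a (i, i) = ∑ᶠ k : ℤ, a (i, k) := by
      intro i
      constructor
      · rw [hcol]
        apply Finset.sum_eq_single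
        · intro b _ hb; exact hoff b i (fun h => hb h.symm)
        · intro h; by_contra h0; exact h (hmemf i i h0).1
      · rw [hrow]
        symm
        apply Finset.sum_eq_single
        · intro b _ hb; exact hoff i b hb
        · intro h; by_contra h0; exact h (hmemf i i h0).1
    refine Or.inl ⟨hA, ?_⟩
    rintro ⟨i₀, _, hlt⟩
    obtain ⟨h1, h2⟩ := hA i₀
    omega
  · push_neg at hP
    obtain ⟨k₁, i₁, hlt₁, hne₁⟩ := hP
    have hPfin : ({p : ℤ × ℤ | a p ≠ 0 ∧ p.1 < p.2}).Finite :=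
      hfin.subset fun p hp => hp.1
    have hFne : (hPfin.toFinset.image Prod.snd).Nonempty :=
      ⟨i₁, Finset.mem_image.2 ⟨(k₁, i₁), hPfin.mem_toFinset.2 ⟨hne₁, hlt₁⟩, rfl⟩⟩
    set i₀ : ℤ := (hPfin.toFinset.image Prod.snd).max' hFne with hi₀
    have hub : ∀ k i : ℤ, a (k, i) ≠ 0 → k < i → i ≤ i₀ := by
      intro k i h hlt
      have hm : i ∈ hPfin.toFinset.image Prod.snd :=
        Finset.mem_image.2 ⟨(k, i), hPfin.mem_toFinset.2 ⟨h, hlt⟩, rfl⟩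
      exact Finset.le_max' _ i hm
    obtain ⟨p, hpmem, hpsnd⟩ :=
      Finset.mem_image.1 ((hPfin.toFinset.image Prod.snd).max'_mem hFne)
    rw [Set.Finite.mem_toFinset] at hpmem
    obtain ⟨hpa, hplt⟩ := hpmem
    have hzero1 : ∀ k i : ℤ, k < i → i₀ < i → a (k, i) = 0 := by
      intro k i h1 h2
      by_contra h0
      exact absurd (hub k i h0 h1) (by omega)
    have hrowc : ∀ i : ℤ, i₀ ≤ i → ∀ b : ℤ, b ≠ i → a (i, b) = 0 := by
      intro i hi b hb
      rcases lt_or_gt_of_ne hb with h | h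
      · rw [hmir]
        exact hzero1 i (2*i - b) (by omega) (by omega)
      · exact hzero1 i b h (by omega)
    have hcolc : ∀ i : ℤ, i₀ < i → ∀ b : ℤ, b ≠ i → a (b, i) = 0 := by
      intro i hi b hb
      rcases lt_or_gt_of_ne hb with h | h
      · exact hzero1 b i h hi
      · rw [hmir]
        exact hzero1 b (2*b - i) (by omega) (by omega)
    have hrowdiag : ∀ i : ℤ, i₀ ≤ i → (∑ᶠ k : ℤ, a (i, k)) = a (i, i) := by
      intro i hi
      rw [hrow]
      apply Finset.sum_eq_single
      · intro b _ hb; exact hrowc i hi b hb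
      · intro h; by_contra h0; exact h (hmemf i i h0).1
    have hcoldiag : ∀ i : ℤ, i₀ < i → (∑ᶠ k : ℤ, a (k, i)) = a (i, i) := by
      intro i hi
      rw [hcol]
      apply Finset.sum_eq_single
      · intro b _ hb; exact hcolc i hi b hb
      · intro h; by_contra h0; exact h (hmemf i i h0).1
    have hpsnd' : p.2 = i₀ := hpsnd
    have hk1 : a (p.1, i₀) ≠ 0 := by rw [← hpsnd']; exact hpa
    have hplt' : p.1 < i₀ := by omega
    have hsub : ({p.1, i₀} : Finset ℤ) ⊆ s := by
      intro x hx
      rcases Finset.mem_insert.1 hx with h | h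
      · subst h; exact (hmemf p.1 i₀ hk1).1
      · rw [Finset.mem_singleton.1 h]; exact (hmemf p.1 i₀ hk1).2
    have hlt2 : (∑ᶠ k : ℤ, a (i₀, k)) < ∑ᶠ k : ℤ, a (k, i₀) := by
      rw [hrowdiag i₀ le_rfl, hcol]
      calc a (i₀, i₀) < a (p.1, i₀) + a (i₀, i₀) := by omega
        _ = ∑ k ∈ ({p.1, i₀} : Finset ℤ), a (k, i₀) := by
          rw [Finset.sum_pair (show p.1 ≠ i₀ by omega)]
        _ ≤ ∑ k ∈ s, a (k, i₀) := Finset.sum_le_sum_of_subset hsub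
    refine Or.inr ⟨⟨i₀, fun i hi => (hcoldiag i hi).trans (hrowdiag i (le_of_lt hi)).symm,
      hlt2⟩, ?_⟩
    intro hA
    obtain ⟨h1, h2⟩ := hA i₀
    omega
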